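/- Let a₁, a₂ ∈ SL(2,ℂ). Then tr(a₁a₂a₁⁻¹a₂⁻¹) = 2 if and only if a₁ and a₂ have a common eigenvector, i.e., there exists a nonzero vector v ∈ ℂ² and scalars c₁, c₂ with a₁v = c₁v and a₂v = c₂v. -/

import Mathlib

open Matrix

/-- every complex quadratic with nonzero leading coefficient has a root -/
lemma quad_root_aux (γ α β : ℂ) (hγ : γ ≠ 0) : ∃ t : ℂ, γ * t ^ 2 = α * t + β := by
  obtain ⟨w, hw⟩ := IsAlgClosed.exists_pow_nat_eq (α ^ 2 + 4 * γ * β) (n := 2) zero_lt_two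
  refine ⟨(α + w) / (2 * γ), ?_⟩
  field_simp
  ring_nf
  linear_combination hw

/-- every binary quadratic has a nonzero root over ℂ -/
lemma quad_nonzero_root (γ α β : ℂ) :
    ∃ x y : ℂ, ¬(x = 0 ∧ y = 0) ∧ γ * x ^ 2 = α * (x * y) + β * y ^ 2 := by
  by_cases hγ : γ = 0
  · exact ⟨1, 0, by simp, by simp [hγ]⟩
  · obtain ⟨t, ht⟩ := quad_root_aux γ α β hγ
    exact ⟨t, 1, by simp, by simpa using ht⟩

/-- a nonzero binary quadratic over ℂ factors into linear forms -/
lemma factor_quad (γ α β : ℂ) (h : ¬(γ = 0 ∧ α = 0 ∧ β = 0)) :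
    ∃ u₁ v₁ u₂ v₂ : ℂ, ¬(u₁ = 0 ∧ v₁ = 0) ∧ ¬(u₂ = 0 ∧ v₂ = 0) ∧
      γ = u₁ * u₂ ∧ α = u₁ * v₂ + u₂ * v₁ ∧ β = -(v₁ * v₂) := by
  by_cases hγ : γ = 0
  · refine ⟨0, 1, α, -β, by simp, ?_, by simp [hγ], by ring, by ring⟩
    rintro ⟨h1, h2⟩
    exact h ⟨hγ, h1, by simpa using h2⟩
  · obtain ⟨t, ht⟩ := quad_root_aux γ α β hγ
    refine ⟨γ, γ * t, 1, α / γ - t, by simp [hγ], by simp, by ring, ?_, ?_⟩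
    · field_simp
      try ring
    · field_simp
      linear_combination -ht

/-- vanishing resultant implies common root -/
lemma res_common_root (γ α β ρ π κ : ℂ)
    (hE : (β * ρ - γ * κ) ^ 2 + (γ * π - ρ * α) * (α * κ - π * β) = 0) :
    ∃ x y : ℂ, ¬(x = 0 ∧ y = 0) ∧ γ * x ^ 2 = α * (x * y) + β * y ^ 2 ∧
      ρ * x ^ 2 = π * (x * y) + κ * y ^ 2 := by
  by_cases hA : γ = 0 ∧ α = 0 ∧ β = 0
  · obtain ⟨x, y, hxy, hq⟩ := quad_nonzero_root ρ π κ
    exact ⟨x, y, hxy, by simp [hA.1, hA.2.1, hA.2.2], hq⟩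
  by_cases hB : ρ = 0 ∧ π = 0 ∧ κ = 0
  · obtain ⟨x, y, hxy, hq⟩ := quad_nonzero_root γ α β
    exact ⟨x, y, hxy, hq, by simp [hB.1, hB.2.1, hB.2.2]⟩
  obtain ⟨u₁, v₁, u₂, v₂, h1, h2, hγ, hα, hβ⟩ := factor_quad γ α β hA
  obtain ⟨w₁, z₁, w₂, z₂, g1, g2, hρ, hπ, hκ⟩ := factor_quad ρ π κ hB
  have hprod : (u₁ * z₁ - v₁ * w₁) * (u₁ * z₂ - v₁ * w₂) *
      ((u₂ * z₁ - v₂ * w₁) * (u₂ * z₂ - v₂ * w₂)) = 0 := by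
    rw [hγ, hα, hβ, hρ, hπ, hκ] at hE
    linear_combination hE
  have key : ∀ u v w z : ℂ, ¬(u = 0 ∧ v = 0) → u * z - v * w = 0 →
      (w * v - z * u = 0) → True := fun _ _ _ _ _ _ _ => trivial
  rcases mul_eq_zero.1 hprod with h | h
  · rcases mul_eq_zero.1 h with h | h
    · refine ⟨v₁, u₁, fun hc => h1 ⟨hc.2, hc.1⟩, ?_, ?_⟩
      · rw [hγ, hα, hβ]; ring
      · rw [hρ, hπ, hκ]; linear_combination -(w₂ * v₁ - z₂ * u₁) * h
    · refine ⟨v₁, u₁, fun hc => h1 ⟨hc.2, hc.1⟩, ?_, ?_⟩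
      · rw [hγ, hα, hβ]; ring
      · rw [hρ, hπ, hκ]; linear_combination -(w₁ * v₁ - z₁ * u₁) * h
  · rcases mul_eq_zero.1 h with h | h
    · refine ⟨v₂, u₂, fun hc => h2 ⟨hc.2, hc.1⟩, ?_, ?_⟩
      · rw [hγ, hα, hβ]; ring
      · rw [hρ, hπ, hκ]; linear_combination -(w₂ * v₂ - z₂ * u₂) * h
    · refine ⟨v₂, u₂, fun hc => h2 ⟨hc.2, hc.1⟩, ?_, ?_⟩
      · rw [hγ, hα, hβ]; ring
      · rw [hρ, hπ, hκ]; linear_combination -(w₁ * v₂ - z₁ * u₂) * h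

/-- a root of the eigenvector quadratic gives an eigenvector -/
lemma eigen_of_quad (M : Matrix (Fin 2) (Fin 2) ℂ) (x y : ℂ)
    (h : M 1 0 * x ^ 2 = (M 0 0 - M 1 1) * (x * y) + M 0 1 * y ^ 2) :
    ∃ cc : ℂ, M.mulVec ![x, y] = cc • ![x, y] := by
  by_cases hx : x = 0
  · subst hx
    by_cases hy : y = 0
    · subst hy
      exact ⟨0, by funext i; fin_cases i <;>
        simp [Matrix.mulVec, dotProduct, Fin.sum_univ_two]⟩
    · have h01 : M 0 1 = 0 := by
        have : M 0 1 * y ^ 2 = 0 := by linear_combination -h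
        rcases mul_eq_zero.1 this with h' | h'
        · exact h'
        · exact absurd (pow_eq_zero_iff two_ne_zero |>.1 h') hy
      refine ⟨M 1 1, ?_⟩
      funext i; fin_cases i <;>
        simp [Matrix.mulVec, dotProduct, Fin.sum_univ_two, h01]
  · refine ⟨(M 0 0 * x + M 0 1 * y) / x, ?_⟩
    funext i; fin_cases i <;>
      simp [Matrix.mulVec, dotProduct, Fin.sum_univ_two]
    · field_simp
    · field_simp
      linear_combination h

/-- an eigenvector gives a root of the eigenvector quadratic -/
lemma quad_of_eigen (M : Matrix (Fin 2) (Fin 2) ℂ) (v : Fin 2 → ℂ) (cc : ℂ)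
    (h : M.mulVec v = cc • v) :
    M 1 0 * (v 0) ^ 2 = (M 0 0 - M 1 1) * (v 0 * v 1) + M 0 1 * (v 1) ^ 2 := by
  have h0 := congrFun h 0
  have h1 := congrFun h 1
  simp [Matrix.mulVec, dotProduct, Fin.sum_univ_two] at h0 h1
  linear_combination v 0 * h1 - v 1 * h0

theorem commutator_trace_two_iff (a₁ a₂ : Matrix (Fin 2) (Fin 2) ℂ)
    (ha₁ : a₁.det = 1) (ha₂ : a₂.det = 1) :
    (a₁ * a₂ * a₁⁻¹ * a₂⁻¹).trace = 2 ↔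
      ∃ v : Fin 2 → ℂ, v ≠ 0 ∧ ∃ c₁ c₂ : ℂ,
        a₁.mulVec v = c₁ • v ∧ a₂.mulVec v = c₂ • v := by
  have hd₁ : a₁ 0 0 * a₁ 1 1 - a₁ 0 1 * a₁ 1 0 = 1 := by
    rw [Matrix.det_fin_two] at ha₁; exact ha₁
  have hd₂ : a₂ 0 0 * a₂ 1 1 - a₂ 0 1 * a₂ 1 0 = 1 := by
    rw [Matrix.det_fin_two] at ha₂; exact ha₂
  have hi₁ : a₁⁻¹ = !![a₁ 1 1, -a₁ 0 1; -a₁ 1 0, a₁ 0 0] := by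
    rw [Matrix.inv_def, ha₁, Matrix.adjugate_fin_two]
    simp
  have hi₂ : a₂⁻¹ = !![a₂ 1 1, -a₂ 0 1; -a₂ 1 0, a₂ 0 0] := by
    rw [Matrix.inv_def, ha₂, Matrix.adjugate_fin_two]
    simp
  set a := a₁ 0 0 with h_a
  set b := a₁ 0 1 with h_b
  set c := a₁ 1 0 with h_c
  set d := a₁ 1 1 with h_d
  set p := a₂ 0 0 with h_p
  set q := a₂ 0 1 with h_q
  set r := a₂ 1 0 with h_r
  set s := a₂ 1 1 with h_s
  have htr : (a₁ * a₂ * a₁⁻¹ * a₂⁻¹).trace =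
      2 + ((b * r - c * q) ^ 2 + (c * (p - s) - r * (a - d)) * ((a - d) * q - (p - s) * b)) := by
    rw [hi₁, hi₂, Matrix.trace_fin_two]
    simp [Matrix.mul_apply, Fin.sum_univ_two]
    linear_combination (2 * (p * s - q * r)) * hd₁ + 2 * hd₂
  rw [htr]
  constructor
  · intro h
    have hE : (b * r - c * q) ^ 2 +
        (c * (p - s) - r * (a - d)) * ((a - d) * q - (p - s) * b) = 0 := by
      linear_combination h
    obtain ⟨x, y, hxy, hq1, hq2⟩ := res_common_root c (a - d) b r (p - s) q hE
    obtain ⟨c₁, hc₁⟩ := eigen_of_quad a₁ x y (by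
      rw [← h_a, ← h_b, ← h_c, ← h_d]; linear_combination hq1)
    obtain ⟨c₂, hc₂⟩ := eigen_of_quad a₂ x y (by
      rw [← h_p, ← h_q, ← h_r, ← h_s]; linear_combination hq2)
    refine ⟨![x, y], ?_, c₁, c₂, hc₁, hc₂⟩
    intro hv
    exact hxy ⟨congrFun hv 0, congrFun hv 1⟩
  · rintro ⟨v, hv, c₁, c₂, hc₁, hc₂⟩
    have hq1 := quad_of_eigen a₁ v c₁ hc₁
    have hq2 := quad_of_eigen a₂ v c₂ hc₂
    rw [← h_a, ← h_b, ← h_c, ← h_d] at hq1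
    rw [← h_p, ← h_q, ← h_r, ← h_s] at hq2
    set x := v 0 with hx
    set y := v 1 with hy
    have hxy : ¬(x = 0 ∧ y = 0) := by
      rintro ⟨h0, h1⟩
      apply hv
      funext i
      fin_cases i
      · exact h0
      · exact h1
    set γ := c with hγ'
    have hEy : ((b * r - c * q) ^ 2 +
        (c * (p - s) - r * (a - d)) * ((a - d) * q - (p - s) * b)) * y ^ 4 = 0 := by
      linear_combination
        (r ^ 2 * (c * x ^ 2 - (a - d) * (x * y) - b * y ^ 2)
          - 2 * r * c * (r * x ^ 2 - (p - s) * (x * y) - q * y ^ 2)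
          - 2 * (c * (p - s) - r * (a - d)) * r * x * y
          + (c * (p - s) - r * (a - d)) * (p - s) * y ^ 2) * hq1 +
        (c ^ 2 * (r * x ^ 2 - (p - s) * (x * y) - q * y ^ 2)
          + 2 * (c * (p - s) - r * (a - d)) * c * x * y
          - (c * (p - s) - r * (a - d)) * (a - d) * y ^ 2) * hq2
    have hEx : ((b * r - c * q) ^ 2 +
        (c * (p - s) - r * (a - d)) * ((a - d) * q - (p - s) * b)) * x ^ 4 = 0 := by
      linear_combination
        (q ^ 2 * (c * x ^ 2 - (a - d) * (x * y) - b * y ^ 2)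
          - 2 * q * b * (r * x ^ 2 - (p - s) * (x * y) - q * y ^ 2)
          + 2 * ((a - d) * q - (p - s) * b) * q * x * y
          + ((a - d) * q - (p - s) * b) * (p - s) * x ^ 2) * hq1 +
        (b ^ 2 * (r * x ^ 2 - (p - s) * (x * y) - q * y ^ 2)
          - 2 * ((a - d) * q - (p - s) * b) * b * x * y
          - ((a - d) * q - (p - s) * b) * (a - d) * x ^ 2) * hq2
    have hE : (b * r - c * q) ^ 2 +
        (c * (p - s) - r * (a - d)) * ((a - d) * q - (p - s) * b) = 0 := by
      by_cases hy0 : y = 0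
      · have hx0 : x ≠ 0 := fun h => hxy ⟨h, hy0⟩
        have := mul_eq_zero.1 hEx
        rcases this with h' | h'
        · exact h'
        · exact absurd (pow_eq_zero_iff (by norm_num) |>.1 h') hx0
      · rcases mul_eq_zero.1 hEy with h' | h'
        · exact h'
        · exact absurd (pow_eq_zero_iff (by norm_num) |>.1 h') hy0
    rw [hE, add_zero]
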